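/- Let u and v be normal upper semicontinuous fuzzy sets in ℝ^m (level sets [u]_α, [v]_α are nonempty closed subsets of ℝ^m for α ∈ (0,1]). Then the function α ↦ H([u]_α, [v]_α) is Lebesgue measurable on [0,1]. -/

import Mathlib

open Set EMetric ENNReal
open scoped NNReal ENNReal

lemma key_aux {X : Type*} [MetricSpace X] {q : ℕ → X} (hq : DenseRange q)
    {s t : Set X} (hs : s.Nonempty) :
    (⨆ x ∈ s, infEdist x t) ≤ ⨆ n, infEdist (q n) t - infEdist (q n) s := by
  refine iSup₂_le fun x hx => ?_
  refine ENNReal.le_of_forall_pos_le_add fun ε hε hlt => ?_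
  have hε2 : (0:ℝ≥0∞) < ((ε/2 : ℝ≥0) : ℝ≥0∞) := by
    exact_mod_cast half_pos hε
  obtain ⟨y, ⟨n, rfl⟩, hy⟩ := EMetric.mem_closure_iff.1 (hq x) _ hε2
  have h2 : infEdist (q n) s ≤ ((ε/2 : ℝ≥0) : ℝ≥0∞) :=
    le_trans (infEdist_le_edist_of_mem hx) (by rw [edist_comm]; exact hy.le)
  calc infEdist x t ≤ edist x (q n) + infEdist (q n) t := infEdist_le_edist_add_infEdist
    _ ≤ ((ε/2 : ℝ≥0) : ℝ≥0∞) + ((infEdist (q n) t - infEdist (q n) s) + infEdist (q n) s) :=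
        add_le_add hy.le le_tsub_add
    _ ≤ ((ε/2 : ℝ≥0) : ℝ≥0∞) + ((⨆ k, infEdist (q k) t - infEdist (q k) s) + ((ε/2 : ℝ≥0) : ℝ≥0∞)) :=
        add_le_add le_rfl (add_le_add (le_iSup (fun k => infEdist (q k) t - infEdist (q k) s) n) h2)
    _ = (⨆ k, infEdist (q k) t - infEdist (q k) s) + ε := by
        rw [← add_assoc, add_comm ((ε/2 : ℝ≥0) : ℝ≥0∞), add_assoc, ← ENNReal.coe_add, add_halves]

lemma key_sup {X : Type*} [MetricSpace X] {q : ℕ → X} (hq : DenseRange q)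
    {s t : Set X} (hs : s.Nonempty) (ht : t.Nonempty) :
    EMetric.hausdorffEdist s t =
      ⨆ n, (infEdist (q n) t - infEdist (q n) s) ⊔ (infEdist (q n) s - infEdist (q n) t) := by
  apply le_antisymm
  · rw [EMetric.hausdorffEdist, EMetric.hausdorffEdist_def]
    refine sup_le ?_ ?_
    · exact le_trans (key_aux hq hs) (iSup_mono fun n => le_sup_left)
    · exact le_trans (key_aux hq ht) (iSup_mono fun n => le_sup_right)
  · refine iSup_le fun n => sup_le ?_ ?_
    · exact tsub_le_iff_right.2
        (by rw [add_comm]; exact infEdist_le_infEdist_add_hausdorffEdist)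
    · refine tsub_le_iff_right.2 ?_
      rw [add_comm, EMetric.hausdorffEdist, EMetric.hausdorffEdist_comm]
      exact infEdist_le_infEdist_add_hausdorffEdist

/-- For normal upper semicontinuous fuzzy sets `u, v` in `ℝ^m`, the function
`α ↦ H([u]_α, [v]_α)` is measurable on `[0,1]`. -/
theorem stmt_5 {m : ℕ} (u v : EuclideanSpace ℝ (Fin m) → ℝ)
    (hu01 : ∀ x, u x ∈ Set.Icc (0 : ℝ) 1) (hv01 : ∀ x, v x ∈ Set.Icc (0 : ℝ) 1)
    (hu : ∀ α ∈ Set.Ioc (0 : ℝ) 1, {x | α ≤ u x}.Nonempty ∧ IsClosed {x | α ≤ u x})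
    (hv : ∀ α ∈ Set.Ioc (0 : ℝ) 1, {x | α ≤ v x}.Nonempty ∧ IsClosed {x | α ≤ v x}) :
    Measurable (fun α : Set.Icc (0 : ℝ) 1 =>
      EMetric.hausdorffEdist
        (if (α : ℝ) ≤ 0 then closure {x | 0 < u x} else {x | (α : ℝ) ≤ u x})
        (if (α : ℝ) ≤ 0 then closure {x | 0 < v x} else {x | (α : ℝ) ≤ v x})) := by
  let X := EuclideanSpace ℝ (Fin m)
  let q : ℕ → X := TopologicalSpace.denseSeq X
  have hq : DenseRange q := TopologicalSpace.denseRange_denseSeq X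
  -- level set maps
  have hanti : ∀ w : X → ℝ, Antitone (fun α : ℝ =>
      if α ≤ 0 then closure {x | 0 < w x} else {x | α ≤ w x}) := by
    intro w a b hab
    by_cases hb : b ≤ 0
    · have ha : a ≤ 0 := le_trans hab hb
      simp [ha, hb]
    · by_cases ha : a ≤ 0
      · simp only [if_pos ha, if_neg hb]
        refine subset_trans ?_ subset_closure
        intro x hx
        exact lt_of_lt_of_le (lt_of_not_ge hb) hx
      · simp only [if_neg ha, if_neg hb]
        intro x hx
        exact le_trans hab hx
  have hmeas : ∀ (w : X → ℝ) (n : ℕ), Measurable (fun α : ℝ =>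
      infEdist (q n) (if α ≤ 0 then closure {x | 0 < w x} else {x | α ≤ w x})) := by
    intro w n
    exact Monotone.measurable (fun a b hab => infEdist_anti (hanti w hab))
  -- nonemptiness
  have hne : ∀ (w : X → ℝ), (∀ α ∈ Set.Ioc (0 : ℝ) 1,
      {x | α ≤ w x}.Nonempty ∧ IsClosed {x | α ≤ w x}) → ∀ α : Set.Icc (0:ℝ) 1,
      (if (α:ℝ) ≤ 0 then closure {x | 0 < w x} else {x | (α:ℝ) ≤ w x}).Nonempty := by
    intro w hw α
    by_cases h : (α:ℝ) ≤ 0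
    · rw [if_pos h]
      obtain ⟨x, hx⟩ := (hw 1 ⟨one_pos, le_refl 1⟩).1
      exact ⟨x, subset_closure (show (0:ℝ) < w x from lt_of_lt_of_le one_pos hx)⟩
    · rw [if_neg h]
      exact (hw α ⟨lt_of_not_ge h, α.2.2⟩).1
  have heq : (fun α : Set.Icc (0 : ℝ) 1 =>
      EMetric.hausdorffEdist
        (if (α : ℝ) ≤ 0 then closure {x | 0 < u x} else {x | (α : ℝ) ≤ u x})
        (if (α : ℝ) ≤ 0 then closure {x | 0 < v x} else {x | (α : ℝ) ≤ v x})) =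
      fun α : Set.Icc (0:ℝ) 1 => ⨆ n,
        (infEdist (q n) (if (α:ℝ) ≤ 0 then closure {x | 0 < v x} else {x | (α:ℝ) ≤ v x}) -
         infEdist (q n) (if (α:ℝ) ≤ 0 then closure {x | 0 < u x} else {x | (α:ℝ) ≤ u x})) ⊔
        (infEdist (q n) (if (α:ℝ) ≤ 0 then closure {x | 0 < u x} else {x | (α:ℝ) ≤ u x}) -
         infEdist (q n) (if (α:ℝ) ≤ 0 then closure {x | 0 < v x} else {x | (α:ℝ) ≤ v x})) := by
    funext α
    exact key_sup hq (hne u hu α) (hne v hv α)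
  rw [heq]
  refine Measurable.iSup fun n => Measurable.sup ?_ ?_
  · exact ((hmeas v n).comp measurable_subtype_coe).sub
      ((hmeas u n).comp measurable_subtype_coe)
  · exact ((hmeas u n).comp measurable_subtype_coe).sub
      ((hmeas v n).comp measurable_subtype_coe)
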